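/- Upper bound for quasi conjunction: let P be a probability measure on a finite sample space with P(H) > 0, P(K) > 0, and set x = P(A|H), y = P(B|K), z = P((A∩H∩B∩K) ∪ (A∩H∩Kᶜ) ∪ (Hᶜ∩B∩K)) / P(H ∪ K). If max(x, y) < 1 then z ≤ (x + y − 2xy)/(1 − xy) (the Hamacher t-conorm with parameter 0). -/

import Mathlib

open MeasureTheory

set_option maxHeartbeats 1000000

/-- Splitting lemma: if `S` is the disjoint union of `T` and `U`, then the
real-valued measures add. -/
lemma fsplit_aux {Ω : Type*} [Fintype Ω] [MeasurableSpace Ω]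
    [MeasurableSingletonClass Ω]
    (μ : Measure Ω) [IsFiniteMeasure μ] (S T U : Set Ω)
    (h1 : ∀ ω, ω ∈ S ↔ ω ∈ T ∨ ω ∈ U) (h2 : ∀ ω, ω ∈ T → ω ∉ U) :
    (μ S).toReal = (μ T).toReal + (μ U).toReal := by
  have hS : S = T ∪ U := Set.ext fun ω => by simpa [Set.mem_union] using h1 ω
  have hd : Disjoint T U := Set.disjoint_left.mpr h2
  rw [hS, measure_union hd (U.toFinite.measurableSet),
    ENNReal.toReal_add (measure_ne_top μ _) (measure_ne_top μ _)]

/-- Upper bound for the probability of the quasi conjunction: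
if `max x y < 1` then `z ≤ (x + y - 2xy)/(1 - xy)` (Hamacher t-conorm
with parameter 0). -/
theorem quasiConj_upper_bound {Ω : Type*} [Fintype Ω] [MeasurableSpace Ω]
    [MeasurableSingletonClass Ω]
    (μ : Measure Ω) [IsProbabilityMeasure μ]
    (A H B K : Set Ω)
    (hH : 0 < (μ H).toReal) (hK : 0 < (μ K).toReal)
    (x y : ℝ)
    (hx : x = (μ (A ∩ H)).toReal / (μ H).toReal)
    (hy : y = (μ (B ∩ K)).toReal / (μ K).toReal)
    (hmax : max x y < 1) :
    (μ ((A ∩ H ∩ B ∩ K) ∪ (A ∩ H ∩ Kᶜ) ∪ (Hᶜ ∩ B ∩ K))).toReal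
        / (μ (H ∪ K)).toReal
      ≤ (x + y - 2 * x * y) / (1 - x * y) := by
  classical
  -- basic positivity facts
  have hm : 0 < (μ (H ∪ K)).toReal := by
    refine lt_of_lt_of_le hH (ENNReal.toReal_mono (measure_ne_top μ _) ?_)
    exact measure_mono Set.subset_union_left
  have hx0 : 0 ≤ x := by rw [hx]; positivity
  have hy0 : 0 ≤ y := by rw [hy]; positivity
  have hx1 : x < 1 := lt_of_le_of_lt (le_max_left _ _) hmax
  have hy1 : y < 1 := lt_of_le_of_lt (le_max_right _ _) hmax
  have hxy : 0 < 1 - x * y := by nlinarith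
  have hxh : x * (μ H).toReal = (μ (A ∩ H)).toReal := by
    rw [hx]; field_simp
  have hyk : y * (μ K).toReal = (μ (B ∩ K)).toReal := by
    rw [hy]; field_simp
  -- splitting identities
  have tac : ∀ S T U : Set Ω, (∀ ω, ω ∈ S ↔ ω ∈ T ∨ ω ∈ U) → (∀ ω, ω ∈ T → ω ∉ U) →
      (μ S).toReal = (μ T).toReal + (μ U).toReal := fun S T U h1 h2 =>
    fsplit_aux μ S T U h1 h2
  have e1 : (μ (A ∩ H ∩ K)).toReal
      = (μ (A ∩ B ∩ H ∩ K)).toReal + (μ (A ∩ Bᶜ ∩ H ∩ K)).toReal := by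
    refine tac _ _ _ (fun ω => ?_) (fun ω => ?_) <;>
      simp only [Set.mem_inter_iff, Set.mem_union, Set.mem_compl_iff] <;> tauto
  have e2 : (μ (Aᶜ ∩ H ∩ K)).toReal
      = (μ (Aᶜ ∩ B ∩ H ∩ K)).toReal + (μ (Aᶜ ∩ Bᶜ ∩ H ∩ K)).toReal := by
    refine tac _ _ _ (fun ω => ?_) (fun ω => ?_) <;>
      simp only [Set.mem_inter_iff, Set.mem_union, Set.mem_compl_iff] <;> tauto
  have e3 : (μ (H ∩ K)).toReal
      = (μ (A ∩ H ∩ K)).toReal + (μ (Aᶜ ∩ H ∩ K)).toReal := by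
    refine tac _ _ _ (fun ω => ?_) (fun ω => ?_) <;>
      simp only [Set.mem_inter_iff, Set.mem_union, Set.mem_compl_iff] <;> tauto
  have e4 : (μ (H ∩ Kᶜ)).toReal
      = (μ (A ∩ H ∩ Kᶜ)).toReal + (μ (Aᶜ ∩ H ∩ Kᶜ)).toReal := by
    refine tac _ _ _ (fun ω => ?_) (fun ω => ?_) <;>
      simp only [Set.mem_inter_iff, Set.mem_union, Set.mem_compl_iff] <;> tauto
  have e5 : (μ H).toReal = (μ (H ∩ K)).toReal + (μ (H ∩ Kᶜ)).toReal := by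
    refine tac _ _ _ (fun ω => ?_) (fun ω => ?_) <;>
      simp only [Set.mem_inter_iff, Set.mem_union, Set.mem_compl_iff] <;> tauto
  have e6 : (μ (Hᶜ ∩ K)).toReal
      = (μ (Hᶜ ∩ B ∩ K)).toReal + (μ (Hᶜ ∩ Bᶜ ∩ K)).toReal := by
    refine tac _ _ _ (fun ω => ?_) (fun ω => ?_) <;>
      simp only [Set.mem_inter_iff, Set.mem_union, Set.mem_compl_iff] <;> tauto
  have e7 : (μ K).toReal = (μ (H ∩ K)).toReal + (μ (Hᶜ ∩ K)).toReal := by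
    refine tac _ _ _ (fun ω => ?_) (fun ω => ?_) <;>
      simp only [Set.mem_inter_iff, Set.mem_union, Set.mem_compl_iff] <;> tauto
  have e8 : (μ (A ∩ H)).toReal
      = (μ (A ∩ H ∩ K)).toReal + (μ (A ∩ H ∩ Kᶜ)).toReal := by
    refine tac _ _ _ (fun ω => ?_) (fun ω => ?_) <;>
      simp only [Set.mem_inter_iff, Set.mem_union, Set.mem_compl_iff] <;> tauto
  have e9 : (μ (B ∩ K)).toReal
      = (μ (B ∩ H ∩ K)).toReal + (μ (Hᶜ ∩ B ∩ K)).toReal := by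
    refine tac _ _ _ (fun ω => ?_) (fun ω => ?_) <;>
      simp only [Set.mem_inter_iff, Set.mem_union, Set.mem_compl_iff] <;> tauto
  have e10 : (μ (B ∩ H ∩ K)).toReal
      = (μ (A ∩ B ∩ H ∩ K)).toReal + (μ (Aᶜ ∩ B ∩ H ∩ K)).toReal := by
    refine tac _ _ _ (fun ω => ?_) (fun ω => ?_) <;>
      simp only [Set.mem_inter_iff, Set.mem_union, Set.mem_compl_iff] <;> tauto
  have e11 : (μ (H ∪ K)).toReal = (μ H).toReal + (μ (Hᶜ ∩ K)).toReal := by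
    refine tac _ _ _ (fun ω => ?_) (fun ω => ?_) <;>
      simp only [Set.mem_inter_iff, Set.mem_union, Set.mem_compl_iff] <;> tauto
  have e12 : (μ ((A ∩ H ∩ B ∩ K) ∪ (A ∩ H ∩ Kᶜ) ∪ (Hᶜ ∩ B ∩ K))).toReal
      = (μ (A ∩ B ∩ H ∩ K)).toReal + ((μ (A ∩ H ∩ Kᶜ)).toReal
        + (μ (Hᶜ ∩ B ∩ K)).toReal) := by
    rw [tac ((A ∩ H ∩ B ∩ K) ∪ (A ∩ H ∩ Kᶜ) ∪ (Hᶜ ∩ B ∩ K))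
        (A ∩ B ∩ H ∩ K) ((A ∩ H ∩ Kᶜ) ∪ (Hᶜ ∩ B ∩ K))
        (fun ω => by
          simp only [Set.mem_inter_iff, Set.mem_union, Set.mem_compl_iff]; try tauto)
        (fun ω => by
          simp only [Set.mem_inter_iff, Set.mem_union, Set.mem_compl_iff]; try tauto),
      tac ((A ∩ H ∩ Kᶜ) ∪ (Hᶜ ∩ B ∩ K)) (A ∩ H ∩ Kᶜ) (Hᶜ ∩ B ∩ K)
        (fun ω => by
          simp only [Set.mem_inter_iff, Set.mem_union, Set.mem_compl_iff]; try tauto)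
        (fun ω => by
          simp only [Set.mem_inter_iff, Set.mem_union, Set.mem_compl_iff]; try tauto)]
  -- name the eight atoms
  set a1 := (μ (A ∩ H ∩ Kᶜ)).toReal with ha1
  set a2 := (μ (Aᶜ ∩ H ∩ Kᶜ)).toReal with ha2
  set b1 := (μ (Hᶜ ∩ B ∩ K)).toReal with hb1
  set b2 := (μ (Hᶜ ∩ Bᶜ ∩ K)).toReal with hb2
  set c1 := (μ (A ∩ B ∩ H ∩ K)).toReal with hc1
  set c2 := (μ (A ∩ Bᶜ ∩ H ∩ K)).toReal with hc2
  set c3 := (μ (Aᶜ ∩ B ∩ H ∩ K)).toReal with hc3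
  set c4 := (μ (Aᶜ ∩ Bᶜ ∩ H ∩ K)).toReal with hc4
  have na1 : 0 ≤ a1 := ENNReal.toReal_nonneg
  have na2 : 0 ≤ a2 := ENNReal.toReal_nonneg
  have nb1 : 0 ≤ b1 := ENNReal.toReal_nonneg
  have nb2 : 0 ≤ b2 := ENNReal.toReal_nonneg
  have nc1 : 0 ≤ c1 := ENNReal.toReal_nonneg
  have nc2 : 0 ≤ c2 := ENNReal.toReal_nonneg
  have nc3 : 0 ≤ c3 := ENNReal.toReal_nonneg
  have nc4 : 0 ≤ c4 := ENNReal.toReal_nonneg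
  -- express everything in terms of the atoms
  have hHa : (μ H).toReal = a1 + a2 + c1 + c2 + c3 + c4 := by
    rw [e5, e3, e1, e2, e4]; ring
  have hKa : (μ K).toReal = b1 + b2 + c1 + c2 + c3 + c4 := by
    rw [e7, e3, e1, e2, e6]; ring
  have hMa : (μ (H ∪ K)).toReal = a1 + a2 + b1 + b2 + c1 + c2 + c3 + c4 := by
    rw [e11, e6, hHa]; ring
  have hAHa : (μ (A ∩ H)).toReal = a1 + c1 + c2 := by
    rw [e8, e1]; ring
  have hBKa : (μ (B ∩ K)).toReal = b1 + c1 + c3 := by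
    rw [e9, e10]; ring
  have hEa : (μ ((A ∩ H ∩ B ∩ K) ∪ (A ∩ H ∩ Kᶜ) ∪ (Hᶜ ∩ B ∩ K))).toReal
      = a1 + b1 + c1 := by rw [e12]; ring
  -- reduce to a polynomial inequality
  rw [div_le_div_iff₀ hm hxy]
  have hhk : 0 < (μ H).toReal * (μ K).toReal := mul_pos hH hK
  rw [← mul_le_mul_iff_of_pos_right hhk]
  have expand1 :
      (μ ((A ∩ H ∩ B ∩ K) ∪ (A ∩ H ∩ Kᶜ) ∪ (Hᶜ ∩ B ∩ K))).toReal * (1 - x * y)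
        * ((μ H).toReal * (μ K).toReal)
      = (μ ((A ∩ H ∩ B ∩ K) ∪ (A ∩ H ∩ Kᶜ) ∪ (Hᶜ ∩ B ∩ K))).toReal
        * ((μ H).toReal * (μ K).toReal
          - (x * (μ H).toReal) * (y * (μ K).toReal)) := by ring
  have expand2 :
      (x + y - 2 * x * y) * (μ (H ∪ K)).toReal * ((μ H).toReal * (μ K).toReal)
      = ((x * (μ H).toReal) * (μ K).toReal + (y * (μ K).toReal) * (μ H).toReal
          - 2 * (x * (μ H).toReal) * (y * (μ K).toReal)) * (μ (H ∪ K)).toReal := by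
    ring
  rw [expand1, expand2, hxh, hyk, hEa, hHa, hKa, hMa, hAHa, hBKa]
  have T1 : (0:ℝ) ≤ (a2 + c3) * (a2 + c3 + c4) * (b1 + c1 + c3) :=
    mul_nonneg (mul_nonneg (by linarith) (by linarith)) (by linarith)
  have T2 : (0:ℝ) ≤ (b2 + c2) * (b2 + c2 + c4) * (a1 + c1 + c2) :=
    mul_nonneg (mul_nonneg (by linarith) (by linarith)) (by linarith)
  have T3 : (0:ℝ) ≤ (a2 + c3 + c4) * (b2 + c2 + c4) * (c1 + c2 + c3) :=
    mul_nonneg (mul_nonneg (by linarith) (by linarith)) (by linarith)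
  linarith [T1, T2, T3]
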